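/- arXiv:2410.18006 — 2 statements merged into one kernel-verified Lean document; each statement's English description precedes it below -/
import Mathlib

section
/- Let ν ∈ P(ℝ^d) be 4-sub-Weibull with parameter σ², i.e., ∫ e^{‖x‖⁴/(2σ²)} dν ≤ 2. Then the centered measure ν̄ = (Id − E_ν[X])_♯ ν is 4-sub-Weibull with parameter σ̄² = 8σ²(2 + log 2)/log 2, i.e., ∫ e^{‖x‖⁴/(2σ̄²)} dν̄(x) ≤ 2. -/
open MeasureTheory

/-- `t ↦ exp (t^4 / c)` is convex for `c > 0`. -/
lemma convexOn_exp_pow4 {c : ℝ} (hc : 0 < c) :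
    ConvexOn ℝ Set.univ (fun t : ℝ => Real.exp (t ^ 4 / c)) := by
  have hq : ConvexOn ℝ Set.univ (fun t : ℝ => t ^ 4 / c) := by
    simpa [div_eq_inv_mul] using
      (Even.convexOn_pow (by decide : Even 4)).smul (by positivity : (0:ℝ) ≤ c⁻¹)
  refine ⟨convex_univ, fun x _ y _ a b ha hb hab => ?_⟩
  calc Real.exp ((a • x + b • y) ^ 4 / c)
      ≤ Real.exp (a • (x ^ 4 / c) + b • (y ^ 4 / c)) := by
        exact Real.exp_le_exp.2 (hq.2 (Set.mem_univ x) (Set.mem_univ y) ha hb hab)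
    _ ≤ a • Real.exp (x ^ 4 / c) + b • Real.exp (y ^ 4 / c) := by
        simpa using convexOn_exp.2 (Set.mem_univ (x ^ 4 / c)) (Set.mem_univ (y ^ 4 / c)) ha hb hab

set_option maxHeartbeats 1000000 in
/-- if `ν` is 4-sub-Weibull with parameter `σ²`, then its centering
`ν̄ = (Id − E_ν[X])_♯ ν` is 4-sub-Weibull with parameter `σ̄² = 8σ²(2 + log 2)/log 2`. -/
theorem centered_subWeibull {d : ℕ} (ν : Measure (EuclideanSpace ℝ (Fin d)))
    [IsProbabilityMeasure ν] (σ : ℝ) (hσ : 0 < σ)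
    (h : ∫⁻ x, ENNReal.ofReal (Real.exp (‖x‖ ^ 4 / (2 * σ ^ 2))) ∂ν ≤ 2) :
    ∫⁻ x, ENNReal.ofReal
        (Real.exp (‖x‖ ^ 4 / (2 * (8 * σ ^ 2 * (2 + Real.log 2) / Real.log 2))))
      ∂(ν.map (fun x => x - ∫ y, y ∂ν)) ≤ 2 := by
  set L : ℝ := Real.log 2 with hLdef
  have hL : 0.6931471803 < L := Real.log_two_gt_d9
  have hL' : L < 0.6931471808 := Real.log_two_lt_d9
  have hL0 : 0 < L := by linarith
  have hσ2 : (0:ℝ) < 2 * σ ^ 2 := by positivity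
  set θ : ℝ := L / (2 + L) with hθdef
  have hθ0 : 0 < θ := by positivity
  have hθ1 : θ < 1 := by
    rw [hθdef, div_lt_one (by linarith)]; linarith
  set m : EuclideanSpace ℝ (Fin d) := ∫ y, y ∂ν with hmdef
  set g : EuclideanSpace ℝ (Fin d) → ℝ := fun x => Real.exp (‖x‖ ^ 4 / (2 * σ ^ 2))
    with hgdef
  have hgpos : ∀ x, 0 < g x := fun x => Real.exp_pos _
  have hgcont : Continuous g := by
    apply Real.continuous_exp.comp
    exact (continuous_norm.pow 4).div_const _
  -- `g` is integrable
  have hgint : Integrable g ν := by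
    refine ⟨hgcont.aestronglyMeasurable, ?_⟩
    rw [hasFiniteIntegral_iff_ofReal (Filter.Eventually.of_forall fun x => (hgpos x).le)]
    exact lt_of_le_of_lt h (by norm_num)
  -- the identity is integrable
  have hid : Integrable (fun y : EuclideanSpace ℝ (Fin d) => y) ν := by
    refine Integrable.mono (hgint.const_mul (1 + 2 * σ ^ 2)) aestronglyMeasurable_id
      (Filter.Eventually.of_forall fun y => ?_)
    have h1 : ‖y‖ ≤ 1 + ‖y‖ ^ 4 := by nlinarith [norm_nonneg y, sq_nonneg (‖y‖ - 1), sq_nonneg (‖y‖^2 - 1), sq_nonneg ‖y‖]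
    have h2 : ‖y‖ ^ 4 ≤ 2 * σ ^ 2 * g y := by
      have := Real.add_one_le_exp (‖y‖ ^ 4 / (2 * σ ^ 2))
      have h3 : ‖y‖ ^ 4 / (2 * σ ^ 2) ≤ g y := by
        refine le_trans ?_ this; nlinarith [Real.exp_pos (‖y‖ ^ 4 / (2 * σ ^ 2))]
      calc ‖y‖ ^ 4 = 2 * σ ^ 2 * (‖y‖ ^ 4 / (2 * σ ^ 2)) := by field_simp
        _ ≤ 2 * σ ^ 2 * g y := by nlinarith
    have h4 : 1 ≤ g y := by
      rw [hgdef]; simpa using Real.one_le_exp (by positivity)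
    have : ‖y‖ ≤ (1 + 2 * σ ^ 2) * g y := by nlinarith
    calc ‖y‖ ≤ (1 + 2 * σ ^ 2) * g y := this
      _ ≤ ‖(1 + 2 * σ ^ 2) * g y‖ := le_abs_self _
  -- real integral of g is at most 2
  have hgint2 : ∫ x, g x ∂ν ≤ 2 := by
    rw [integral_eq_lintegral_of_nonneg_ae (Filter.Eventually.of_forall fun x => (hgpos x).le)
      hgcont.aestronglyMeasurable]
    refine ENNReal.toReal_le_of_le_ofReal (by norm_num) ?_
    simpa [ENNReal.ofReal_ofNat] using h
  -- Jensen: `‖m‖ ^ 4 ≤ 2 σ² log 2`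
  have hm4 : ‖m‖ ^ 4 ≤ 2 * σ ^ 2 * L := by
    have hψ := convexOn_exp_pow4 hσ2
    have hnorm_int : Integrable (fun y : EuclideanSpace ℝ (Fin d) => ‖y‖) ν := hid.norm
    have hJ := hψ.map_integral_le
        (Real.continuous_exp.comp ((continuous_pow 4).div_const _)).continuousOn isClosed_univ
        (Filter.Eventually.of_forall fun y => Set.mem_univ (‖y‖)) hnorm_int ?_
    · have hJ2 : Real.exp ((∫ y, ‖y‖ ∂ν) ^ 4 / (2 * σ ^ 2)) ≤ 2 := by
        refine le_trans hJ ?_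
        simpa [hgdef] using hgint2
      have hmono : ‖m‖ ^ 4 ≤ (∫ y, ‖y‖ ∂ν) ^ 4 := by
        have h1 : ‖m‖ ≤ ∫ y, ‖y‖ ∂ν := norm_integral_le_integral_norm _
        exact pow_le_pow_left₀ (norm_nonneg m) h1 4
      have h2 : (∫ y, ‖y‖ ∂ν) ^ 4 / (2 * σ ^ 2) ≤ L := by
        have := Real.exp_le_exp.1 (hJ2.trans_eq (Real.exp_log (by norm_num)).symm)
        exact this
      calc ‖m‖ ^ 4 ≤ (∫ y, ‖y‖ ∂ν) ^ 4 := hmono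
        _ = 2 * σ ^ 2 * ((∫ y, ‖y‖ ∂ν) ^ 4 / (2 * σ ^ 2)) := by field_simp
        _ ≤ 2 * σ ^ 2 * L := by nlinarith
    · simpa [hgdef, Function.comp_def] using hgint
  -- rewrite the mapped integral
  set c : ℝ := 2 * (8 * σ ^ 2 * (2 + L) / L) with hcdef
  have hc0 : 0 < c := by positivity
  have hmeas : Measurable (fun x : EuclideanSpace ℝ (Fin d) =>
      ENNReal.ofReal (Real.exp (‖x‖ ^ 4 / c))) := by
    exact (Real.continuous_exp.comp ((continuous_norm.pow 4).div_const _)).measurable.ennreal_ofReal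
  rw [lintegral_map hmeas (by fun_prop : Measurable fun x : EuclideanSpace ℝ (Fin d) => x - m)]
  -- pointwise bound
  have hpt : ∀ x : EuclideanSpace ℝ (Fin d),
      Real.exp (‖x - m‖ ^ 4 / c) ≤ Real.exp (θ * L) * ((1 - θ) + θ * g x) := by
    intro x
    set a := ‖x‖; set b := ‖m‖
    have ha : 0 ≤ a := norm_nonneg _
    have hb : 0 ≤ b := norm_nonneg _
    have h8 : ‖x - m‖ ^ 4 ≤ 8 * (a ^ 4 + b ^ 4) := by
      have h1 : ‖x - m‖ ≤ a + b := norm_sub_le _ _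
      have h2 : ‖x - m‖ ^ 4 ≤ (a + b) ^ 4 :=
        pow_le_pow_left₀ (norm_nonneg _) h1 4
      nlinarith [sq_nonneg (a - b), sq_nonneg (a + b), sq_nonneg (a^2 - b^2), sq_nonneg (a*b)]
    set t : ℝ := a ^ 4 / (2 * σ ^ 2) with htdef
    have ht0 : 0 ≤ t := by positivity
    have hexp_arg : ‖x - m‖ ^ 4 / c ≤ θ * t + θ * L := by
      have hkey : ‖x - m‖ ^ 4 / c ≤ θ * (a ^ 4 + b ^ 4) / (2 * σ ^ 2) := by
        rw [hcdef, hθdef, div_le_div_iff₀ (by positivity) hσ2]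
        have expand : L / (2 + L) * (a ^ 4 + b ^ 4) * (2 * (8 * σ ^ 2 * (2 + L) / L))
            = 8 * (a ^ 4 + b ^ 4) * (2 * σ ^ 2) := by
          field_simp
        rw [expand]
        nlinarith
      refine hkey.trans ?_
      have heq2 : θ * (a ^ 4 + b ^ 4) / (2 * σ ^ 2) = θ * t + θ * (b ^ 4 / (2 * σ ^ 2)) := by
        rw [htdef]; field_simp
      rw [heq2]
      have h5 : b ^ 4 / (2 * σ ^ 2) ≤ L := by
        rw [div_le_iff₀ hσ2]; nlinarith [hm4]
      have h6 : θ * (b ^ 4 / (2 * σ ^ 2)) ≤ θ * L := mul_le_mul_of_nonneg_left h5 hθ0.le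
      linarith
    calc Real.exp (‖x - m‖ ^ 4 / c) ≤ Real.exp (θ * t + θ * L) :=
          Real.exp_le_exp.2 hexp_arg
      _ = Real.exp (θ * L) * Real.exp (θ * t) := by rw [← Real.exp_add]; ring_nf
      _ ≤ Real.exp (θ * L) * ((1 - θ) + θ * g x) := by
          refine mul_le_mul_of_nonneg_left ?_ (Real.exp_pos _).le
          have hconv := convexOn_exp.2 (Set.mem_univ t) (Set.mem_univ (0:ℝ))
            hθ0.le (by linarith : (0:ℝ) ≤ 1 - θ) (by ring)
          have hgx : g x = Real.exp t := by rw [hgdef, htdef]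
          rw [hgx]
          simpa [Real.exp_zero, smul_eq_mul, mul_comm, add_comm] using hconv
  -- integrate the bound
  have step1 : ∫⁻ x, ENNReal.ofReal (Real.exp (‖x - m‖ ^ 4 / c)) ∂ν
      ≤ ∫⁻ x, ENNReal.ofReal (Real.exp (θ * L) * ((1 - θ) + θ * g x)) ∂ν :=
    lintegral_mono fun x => ENNReal.ofReal_le_ofReal (hpt x)
  have hgmeas : Measurable fun x : EuclideanSpace ℝ (Fin d) => ENNReal.ofReal (g x) :=
    hgcont.measurable.ennreal_ofReal
  have step2 : ∫⁻ x, ENNReal.ofReal (Real.exp (θ * L) * ((1 - θ) + θ * g x)) ∂ν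
      ≤ ENNReal.ofReal (Real.exp (θ * L)) * (ENNReal.ofReal (1 - θ) + ENNReal.ofReal θ * 2) := by
    have heq : ∀ x : EuclideanSpace ℝ (Fin d),
        ENNReal.ofReal (Real.exp (θ * L) * ((1 - θ) + θ * g x))
        = ENNReal.ofReal (Real.exp (θ * L)) *
          (ENNReal.ofReal (1 - θ) + ENNReal.ofReal θ * ENNReal.ofReal (g x)) := by
      intro x
      rw [ENNReal.ofReal_mul (Real.exp_pos _).le,
        ENNReal.ofReal_add (by linarith) (by positivity),
        ENNReal.ofReal_mul hθ0.le]
    simp only [heq]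
    rw [lintegral_const_mul _ (by
      exact (measurable_const.add (hgmeas.const_mul _)) )]
    refine mul_le_mul_right ?_ _
    rw [lintegral_add_left measurable_const, lintegral_const_mul _ hgmeas, lintegral_const]
    simp only [measure_univ, mul_one]
    exact add_le_add_right (mul_le_mul_right h _) _
  -- numeric bound
  have hnum : ENNReal.ofReal (Real.exp (θ * L)) * (ENNReal.ofReal (1 - θ) + ENNReal.ofReal θ * 2)
      ≤ 2 := by
    have h2 : (2 : ENNReal) = ENNReal.ofReal 2 := by norm_num
    rw [h2, ← ENNReal.ofReal_mul hθ0.le, ← ENNReal.ofReal_add (by linarith) (by positivity),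
      ← ENNReal.ofReal_mul (Real.exp_pos _).le]
    refine ENNReal.ofReal_le_ofReal ?_
    have hθ' : θ < 0.2575 := by
      rw [hθdef, div_lt_iff₀ (by linarith)]; nlinarith
    have hθL : θ * L < 0.18 := by nlinarith
    have hexp : Real.exp (θ * L) ≤ 1 / 0.82 := by
      have h1 : 1 - θ * L ≤ Real.exp (-(θ * L)) := by
        have := Real.add_one_le_exp (-(θ * L)); linarith
      have h2 : (0.82 : ℝ) ≤ Real.exp (-(θ * L)) := by linarith
      have h3 : Real.exp (θ * L) * Real.exp (-(θ * L)) = 1 := by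
        rw [← Real.exp_add]; simp
      rw [le_div_iff₀ (by norm_num)]
      nlinarith [Real.exp_pos (θ * L)]
    nlinarith [Real.exp_pos (θ * L)]
  calc ∫⁻ x, ENNReal.ofReal (Real.exp (‖x - m‖ ^ 4 / c)) ∂ν
      ≤ ENNReal.ofReal (Real.exp (θ * L)) * (ENNReal.ofReal (1 - θ) + ENNReal.ofReal θ * 2) :=
        step1.trans step2
    _ ≤ 2 := hnum
end

section
/- Let μ₀ be a finitely supported probability measure on ℝ^d that is not a point mass, with centered version μ̄₀ and cross-correlation matrix Σ = ∫ z zᵀ dμ̄₀(z). Then for any two distinct points x, x' in the support of μ̄₀, (x − x')ᵀ Σ (x − x') > 0. -/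
open MeasureTheory
open scoped RealInnerProductSpace

/-- let `μ̄₀` be the centering of a finitely supported probability measure
on `ℝ^d` that is not a point mass, represented by distinct support points `x i` with positive
weights `p i` summing to `1` and mean zero. With `Σ = ∑ᵢ pᵢ xᵢxᵢᵀ`, for any two distinct
support points `x k ≠ x l` one has `(x k − x l)ᵀ Σ (x k − x l) > 0`, where
`vᵀ Σ v = ∑ᵢ pᵢ ⟪xᵢ, v⟫²`. -/
theorem quadform_pos_on_support {d N : ℕ} (hN : 2 ≤ N)
    (x : Fin N → EuclideanSpace ℝ (Fin d)) (hinj : Function.Injective x)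
    (p : Fin N → ℝ) (hp : ∀ i, 0 < p i) (hsum : ∑ i, p i = 1)
    (hmean : ∑ i, p i • x i = 0) :
    ∀ k l : Fin N, k ≠ l → 0 < ∑ i, p i * ⟪x i, x k - x l⟫ ^ 2 := by
  intro k l hkl
  set v := x k - x l with hv
  have hvne : v ≠ 0 := sub_ne_zero.mpr fun h => hkl (hinj h)
  rcases lt_or_eq_of_le (Finset.sum_nonneg fun i _ =>
      mul_nonneg (hp i).le (sq_nonneg _)) with hlt | heq
  · exact hlt
  exfalso
  have hterm : ∀ i ∈ Finset.univ, p i * ⟪x i, v⟫ ^ 2 = 0 :=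
    (Finset.sum_eq_zero_iff_of_nonneg fun i _ =>
      mul_nonneg (hp i).le (sq_nonneg _)).mp heq.symm
  have hiz : ∀ i, ⟪x i, v⟫ = 0 := fun i => by
    have := hterm i (Finset.mem_univ i)
    have h2 : ⟪x i, v⟫ ^ 2 = 0 := by
      rcases mul_eq_zero.mp this with h | h
      · exact absurd h (hp i).ne'
      · exact h
    exact pow_eq_zero_iff (by norm_num) |>.mp h2
  have : ⟪v, v⟫ = 0 := by
    rw [hv, inner_sub_left, hiz k, hiz l, sub_zero]
  exact hvne (inner_self_eq_zero.mp this)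
end
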